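/- Let Σ be a d×d positive definite matrix with eigenvalues λ₁ ≤ ⋯ ≤ λ_d (λ_min = λ₁, λ_max = λ_d), and let μ ∈ ℝ^d, μ ≠ 0. Write μ̂ = μ/‖μ‖₂ = Σᵢ aᵢ uᵢ in the eigenbasis {uᵢ} of Σ, with Σᵢ aᵢ² = 1. Then μ̂ᵀ(Σ - μμᵀ/(μᵀΣ⁻¹μ))μ̂ = [Σ_{i,j} aᵢ²aⱼ²(λᵢ-λⱼ)² ∏_{k≠i,j} λ_k] / [2 Σᵢ aᵢ² ∏_{j≠i} λⱼ]. -/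

import Mathlib

open Matrix Finset

lemma sum_smul_dot (d : ℕ) (u : Fin d → Fin d → ℝ) (b : Fin d → ℝ) (w : Fin d → ℝ) :
    (∑ i, b i • u i) ⬝ᵥ w = ∑ i, b i * (u i ⬝ᵥ w) := by
  simp only [dotProduct, Finset.sum_apply, Pi.smul_apply, smul_eq_mul, Finset.sum_mul,
    Finset.mul_sum]
  rw [Finset.sum_comm]
  exact Finset.sum_congr rfl fun i _ => Finset.sum_congr rfl fun k _ => by ring

lemma dot_sum_smul (d : ℕ) (u : Fin d → Fin d → ℝ) (c : Fin d → ℝ) (w : Fin d → ℝ) :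
    w ⬝ᵥ (∑ j, c j • u j) = ∑ j, c j * (w ⬝ᵥ u j) := by
  simp only [dotProduct, Finset.sum_apply, Pi.smul_apply, smul_eq_mul, Finset.mul_sum]
  rw [Finset.sum_comm]
  exact Finset.sum_congr rfl fun j _ => Finset.sum_congr rfl fun k _ => by ring

lemma dot_expand (d : ℕ) (u : Fin d → Fin d → ℝ)
    (horth : ∀ i j, u i ⬝ᵥ u j = if i = j then 1 else 0)
    (b c : Fin d → ℝ) :
    (∑ i, b i • u i) ⬝ᵥ (∑ j, c j • u j) = ∑ i, b i * c i := by
  rw [sum_smul_dot]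
  refine Finset.sum_congr rfl fun i _ => ?_
  rw [dot_sum_smul]
  simp [horth]

lemma double_helper (n : ℕ) (f g h : Fin n → ℝ) (P : ℝ) :
    ∑ i, ∑ j, (P * (f i * g j) + P * (g i * f j) - 2 * P * (h i * h j))
      = P * ((∑ i, f i) * (∑ j, g j)) + P * ((∑ i, g i) * (∑ j, f j))
        - 2 * P * ((∑ i, h i) * (∑ j, h j)) := by
  have row : ∀ i, ∑ j, (P * (f i * g j) + P * (g i * f j) - 2 * P * (h i * h j))
      = P * (f i * ∑ j, g j) + P * (g i * ∑ j, f j) - 2 * P * (h i * ∑ j, h j) := by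
    intro i
    rw [Finset.sum_sub_distrib, Finset.sum_add_distrib]
    simp only [← Finset.mul_sum]
  rw [Finset.sum_congr rfl fun i _ => row i, Finset.sum_sub_distrib, Finset.sum_add_distrib]
  simp only [← Finset.mul_sum, ← Finset.sum_mul]

theorem stmt_4 (d : ℕ) (S : Matrix (Fin d) (Fin d) ℝ) (hS : S.PosDef)
    (l : Fin d → ℝ) (hmono : Monotone l)
    (u : Fin d → Fin d → ℝ)
    (heig : ∀ i, S.mulVec (u i) = l i • u i)
    (horth : ∀ i j, u i ⬝ᵥ u j = if i = j then 1 else 0)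
    (μ : Fin d → ℝ) (hμ : μ ≠ 0)
    (a : Fin d → ℝ) (μhat : Fin d → ℝ)
    (hμhat : μhat = (Real.sqrt (μ ⬝ᵥ μ))⁻¹ • μ)
    (hexp : μhat = ∑ i, a i • u i)
    (ha : ∑ i, (a i) ^ 2 = 1) :
    μhat ⬝ᵥ S.mulVec μhat - (μhat ⬝ᵥ μ) ^ 2 / (μ ⬝ᵥ S⁻¹.mulVec μ)
      = (∑ i, ∑ j, (a i) ^ 2 * (a j) ^ 2 * (l i - l j) ^ 2 * ∏ k ∈ univ \ {i, j}, l k)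
        / (2 * ∑ i, (a i) ^ 2 * ∏ j ∈ univ \ {i}, l j) := by
  classical
  have hu_ne : ∀ i, u i ≠ 0 := by
    intro i h
    have := horth i i
    simp [h] at this
  have hl : ∀ i, 0 < l i := by
    intro i
    have h := hS.dotProduct_mulVec_pos (hu_ne i)
    have hstar : star (u i) = u i := by
      funext k; simp
    rw [hstar, heig i, dotProduct_smul, smul_eq_mul, horth i i] at h
    simpa using h
  have hl0 : ∀ i, l i ≠ 0 := fun i => (hl i).ne'
  set P : ℝ := ∏ i, l i with hPdef
  have hP : 0 < P := Finset.prod_pos fun i _ => hl i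
  set A : ℝ := ∑ i, (a i) ^ 2 * l i with hAdef
  set T : ℝ := ∑ i, (a i) ^ 2 * (l i)⁻¹ with hTdef
  have hexa : ∃ i, a i ≠ 0 := by
    by_contra h
    push_neg at h
    simp [h] at ha
  have hT : 0 < T := by
    obtain ⟨i, hi⟩ := hexa
    refine Finset.sum_pos' (fun j _ => ?_) ⟨i, Finset.mem_univ i, ?_⟩
    · have h2 : (0:ℝ) ≤ a j ^ 2 := sq_nonneg _
      have h3 : (0:ℝ) < (l j)⁻¹ := inv_pos.mpr (hl j)
      nlinarith
    · exact mul_pos ((pow_ne_zero 2 hi).symm.lt_of_le (sq_nonneg _)) (inv_pos.mpr (hl i))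
  have hSmul : S.mulVec μhat = ∑ i, (a i * l i) • u i := by
    rw [hexp, ← Matrix.mulVecLin_apply, map_sum]
    refine Finset.sum_congr rfl fun i _ => ?_
    rw [LinearMap.map_smul, Matrix.mulVecLin_apply, heig i, smul_smul]
  have hdet : IsUnit S.det := isUnit_iff_ne_zero.mpr hS.det_pos.ne'
  have hSinv : ∀ i, S⁻¹.mulVec (u i) = (l i)⁻¹ • u i := by
    intro i
    have h1 : S⁻¹.mulVec (S.mulVec (u i)) = u i := by
      rw [Matrix.mulVec_mulVec, Matrix.nonsing_inv_mul S hdet, Matrix.one_mulVec]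
    rw [heig i, Matrix.mulVec_smul] at h1
    have := congrArg (fun v => (l i)⁻¹ • v) h1
    simpa [smul_smul, inv_mul_cancel₀ (hl0 i)] using this
  have hSinvmul : S⁻¹.mulVec μhat = ∑ i, (a i * (l i)⁻¹) • u i := by
    rw [hexp, ← Matrix.mulVecLin_apply, map_sum]
    refine Finset.sum_congr rfl fun i _ => ?_
    rw [LinearMap.map_smul, Matrix.mulVecLin_apply, hSinv i, smul_smul]
  have hμμ : 0 < μ ⬝ᵥ μ := by
    rcases lt_or_eq_of_le (Finset.sum_nonneg fun i _ => mul_self_nonneg (μ i)) with h | h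
    · exact h
    · exact absurd (dotProduct_self_eq_zero.mp h.symm) hμ
  set c : ℝ := Real.sqrt (μ ⬝ᵥ μ) with hcdef
  have hc : 0 < c := Real.sqrt_pos.mpr hμμ
  have hμe : μ = c • μhat := by
    rw [hμhat, smul_smul, mul_inv_cancel₀ hc.ne', one_smul]
  have hd1 : μhat ⬝ᵥ S.mulVec μhat = A := by
    rw [hSmul, hexp, dot_expand d u horth]
    exact Finset.sum_congr rfl fun i _ => by ring
  have hhat : μhat ⬝ᵥ μhat = 1 := by
    rw [hexp, dot_expand d u horth, ← ha]
    exact Finset.sum_congr rfl fun i _ => by ring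
  have hd2 : μhat ⬝ᵥ μ = c := by
    rw [hμe, dotProduct_smul, hhat, smul_eq_mul, mul_one]
  have hd3 : μ ⬝ᵥ S⁻¹.mulVec μ = c ^ 2 * T := by
    rw [hμe, Matrix.mulVec_smul, dotProduct_smul, smul_dotProduct]
    have : μhat ⬝ᵥ S⁻¹.mulVec μhat = T := by
      rw [hSinvmul, hexp, dot_expand d u horth]
      exact Finset.sum_congr rfl fun i _ => by ring
    rw [this, smul_eq_mul, smul_eq_mul]
    ring
  have hden : (∑ i, (a i) ^ 2 * ∏ j ∈ univ \ {i}, l j) = P * T := by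
    rw [hTdef, Finset.mul_sum]
    refine Finset.sum_congr rfl fun i _ => ?_
    have hpe : (∏ j ∈ univ \ {i}, l j) * l i = P := by
      rw [Finset.sdiff_singleton_eq_erase, hPdef]
      exact Finset.prod_erase_mul univ l (Finset.mem_univ i)
    have : (∏ j ∈ univ \ {i}, l j) = P * (l i)⁻¹ := by
      rw [eq_mul_inv_iff_mul_eq₀ (hl0 i)]
      exact hpe
    rw [this]; ring
  have hnum : (∑ i, ∑ j, (a i) ^ 2 * (a j) ^ 2 * (l i - l j) ^ 2 * ∏ k ∈ univ \ {i, j}, l k)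
      = 2 * P * (A * T - 1) := by
    have hterm : ∀ i j : Fin d,
        (a i) ^ 2 * (a j) ^ 2 * (l i - l j) ^ 2 * ∏ k ∈ univ \ {i, j}, l k
        = P * (((a i) ^ 2 * l i) * ((a j) ^ 2 * (l j)⁻¹))
          + P * (((a i) ^ 2 * (l i)⁻¹) * ((a j) ^ 2 * l j))
          - 2 * P * ((a i) ^ 2 * (a j) ^ 2) := by
      intro i j
      by_cases hij : i = j
      · subst hij
        simp only [sub_self, ne_eq, OfNat.ofNat_ne_zero, not_false_eq_true, zero_pow, mul_zero,
          zero_mul]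
        field_simp [hl0 i]
        ring
      · have hprod : (∏ k ∈ univ \ {i, j}, l k) * l i * l j = P := by
          have h1 : (univ : Finset (Fin d)) \ {i, j} = (univ.erase j).erase i := by
            ext x
            simp only [Finset.mem_sdiff, Finset.mem_univ, Finset.mem_insert, Finset.mem_singleton,
              Finset.mem_erase, true_and, and_true]
            tauto
          have h2 : (∏ k ∈ (univ.erase j).erase i, l k) * l i = ∏ k ∈ univ.erase j, l k :=
            Finset.prod_erase_mul _ l (Finset.mem_erase.mpr ⟨hij, Finset.mem_univ i⟩)
          rw [h1, hPdef, h2]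
          exact Finset.prod_erase_mul univ l (Finset.mem_univ j)
        have hpp : (∏ k ∈ univ \ {i, j}, l k) = P * (l i)⁻¹ * (l j)⁻¹ := by
          rw [mul_assoc, ← mul_inv, eq_mul_inv_iff_mul_eq₀ (mul_ne_zero (hl0 i) (hl0 j))]
          rw [← hprod]; ring
        rw [hpp]
        field_simp [hl0 i, hl0 j]
        ring
    calc (∑ i, ∑ j, (a i) ^ 2 * (a j) ^ 2 * (l i - l j) ^ 2 * ∏ k ∈ univ \ {i, j}, l k)
        = ∑ i, ∑ j, (P * (((a i) ^ 2 * l i) * ((a j) ^ 2 * (l j)⁻¹))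
          + P * (((a i) ^ 2 * (l i)⁻¹) * ((a j) ^ 2 * l j))
          - 2 * P * ((a i) ^ 2 * (a j) ^ 2)) :=
          Finset.sum_congr rfl fun i _ => Finset.sum_congr rfl fun j _ => hterm i j
      _ = P * ((∑ i, (a i) ^ 2 * l i) * (∑ j, (a j) ^ 2 * (l j)⁻¹))
          + P * ((∑ i, (a i) ^ 2 * (l i)⁻¹) * (∑ j, (a j) ^ 2 * l j))
          - 2 * P * ((∑ i, (a i) ^ 2) * (∑ j, (a j) ^ 2)) :=
          double_helper d _ _ _ P
      _ = 2 * P * (A * T - 1) := by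
          rw [← hAdef, ← hTdef, ha]
          ring
  rw [hd1, hd2, hd3, hnum, hden]
  have hc2 : c ^ 2 ≠ 0 := pow_ne_zero 2 hc.ne'
  field_simp
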